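/- Let Y have the k-truncated Poisson distribution of parameter λ, let A > B > e be constants with A/e ≥ B, and let p be a fixed nonnegative integer. Then there is a constant C (depending on A, B, p, k only) such that for all integers j ≥ max{Aeλ, k}, E[[Y]_p · 1_{Y ≥ j}] ≤ C · B^{−j}, where [Y]_p = Y(Y−1)⋯(Y−p+1). -/

import Mathlib

open Real

/-- `fk k x = ∑_{i ≥ k} x^i / i!`. -/
noncomputable def fk (k : ℕ) (x : ℝ) : ℝ :=
  ∑' i : ℕ, if k ≤ i then x ^ i / (Nat.factorial i : ℝ) else 0

/-- `n^n ≤ e^n * n!`. -/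
lemma pow_self_le_exp_mul_factorial (n : ℕ) :
    (n : ℝ) ^ n ≤ Real.exp 1 ^ n * (Nat.factorial n : ℝ) := by
  have h1 : (n : ℝ) ^ n / (Nat.factorial n : ℝ) ≤ Real.exp n := by
    have := Real.sum_le_exp_of_nonneg (x := (n : ℝ)) (by positivity) (n + 1)
    refine le_trans ?_ this
    have := Finset.single_le_sum (f := fun i : ℕ => (n : ℝ) ^ i / (Nat.factorial i : ℝ))
      (fun i _ => by positivity) (Finset.self_mem_range_succ n)
    simpa using this
  have h2 : Real.exp (n : ℝ) = Real.exp 1 ^ n := by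
    rw [← Real.exp_nat_mul, mul_one]
  have hf : (0 : ℝ) < (Nat.factorial n : ℝ) := by positivity
  rw [div_le_iff₀ hf] at h1
  calc (n : ℝ) ^ n ≤ Real.exp n * (Nat.factorial n : ℝ) := h1
    _ = Real.exp 1 ^ n * (Nat.factorial n : ℝ) := by rw [h2]

theorem stmt_4 (k p : ℕ) (A B : ℝ) (hB : Real.exp 1 < B) (hBA : B < A)
    (hAe : B ≤ A / Real.exp 1) :
    ∃ C : ℝ, 0 < C ∧ ∀ (l : ℝ), 0 < l → ∀ j : ℕ,
      A * Real.exp 1 * l ≤ (j : ℝ) → k ≤ j →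
      ∑' i : ℕ, (if j ≤ i then
          (Nat.descFactorial i p : ℝ) *
            (if k ≤ i then l ^ i / (fk k l * (Nat.factorial i : ℝ)) else 0)
        else 0) ≤ C * B ^ (-(j : ℤ)) := by
  have he : (0:ℝ) < Real.exp 1 := Real.exp_pos 1
  have he1 : (1:ℝ) < Real.exp 1 := by
    have := Real.add_one_le_exp (1:ℝ); linarith
  have hB1 : (1:ℝ) < B := lt_trans he1 hB
  have hB0 : (0:ℝ) < B := lt_trans one_pos hB1
  have hA0 : (0:ℝ) < A := lt_trans hB0 hBA
  have hAe0 : (0:ℝ) < A * Real.exp 1 := by positivity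
  set r : ℝ := B / A with hr
  have hr0 : (0:ℝ) < r := by positivity
  have hr1 : r < 1 := (div_lt_one hA0).mpr hBA
  have hS : Summable (fun i : ℕ => (i:ℝ)^p * r^i) := by
    apply summable_pow_mul_geometric_of_norm_lt_one
    rw [Real.norm_eq_abs, abs_of_pos hr0]; exact hr1
  set S : ℝ := ∑' i : ℕ, (i:ℝ)^p * r^i with hSdef
  have hS0 : 0 ≤ S := tsum_nonneg (fun i => by positivity)
  set K : ℝ := (Nat.factorial k : ℝ) * (A * Real.exp 1)^k with hKdef
  have hK0 : 0 < K := by positivity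
  refine ⟨K * S + 1, by positivity, ?_⟩
  intro l hl j hj hkj
  -- basic facts about fk
  have hsum_fk : Summable (fun i : ℕ => if k ≤ i then l ^ i / (Nat.factorial i : ℝ) else 0) := by
    apply Summable.of_nonneg_of_le (fun i => ?_) (fun i => ?_)
      (Real.summable_pow_div_factorial l)
    · split <;> positivity
    · split
      · exact le_rfl
      · positivity
  have hfk_ge : l ^ k / (Nat.factorial k : ℝ) ≤ fk k l := by
    have := Summable.le_tsum hsum_fk k (fun b _ => by split <;> positivity)
    simpa [fk] using this
  have hfk_pos : 0 < fk k l := lt_of_lt_of_le (by positivity) hfk_ge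
  have hfact_pos : (0:ℝ) < (Nat.factorial k : ℝ) := by positivity
  have hlk : l ^ k ≤ fk k l * (Nat.factorial k : ℝ) := by
    rw [div_le_iff₀ hfact_pos] at hfk_ge; exact hfk_ge
  have hBjinv : (B:ℝ) ^ (-(j:ℤ)) = (B ^ j)⁻¹ := by
    rw [zpow_neg, zpow_natCast]
  -- per-term bound
  have key : ∀ i : ℕ, (if j ≤ i then
      (Nat.descFactorial i p : ℝ) *
        (if k ≤ i then l ^ i / (fk k l * (Nat.factorial i : ℝ)) else 0) else 0)
      ≤ K * ((i:ℝ)^p * r^i) * (B ^ j)⁻¹ := by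
    intro i
    split
    · next hji =>
      have hki : k ≤ i := le_trans hkj hji
      rw [if_pos hki]
      have hli : l ≤ (i:ℝ) / (A * Real.exp 1) := by
        rw [le_div_iff₀ hAe0]
        calc l * (A * Real.exp 1) = A * Real.exp 1 * l := by ring
          _ ≤ (j:ℝ) := hj
          _ ≤ (i:ℝ) := Nat.cast_le.mpr hji
      -- bound l^i / (fk * i!)
      have step1 : l ^ i / (fk k l * (Nat.factorial i : ℝ))
          ≤ (Nat.factorial k : ℝ) * (l ^ (i - k) / (Nat.factorial i : ℝ)) := by
        have hdecomp : l ^ i = l ^ k * l ^ (i - k) := by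
          rw [← pow_add, Nat.add_sub_cancel' hki]
        rw [hdecomp, mul_div_mul_comm]
        apply mul_le_mul_of_nonneg_right _ (by positivity)
        rw [div_le_iff₀ hfk_pos]
        calc l ^ k ≤ fk k l * (Nat.factorial k : ℝ) := hlk
          _ = (Nat.factorial k : ℝ) * fk k l := mul_comm _ _
      have step2 : l ^ (i - k) ≤ ((i:ℝ) / (A * Real.exp 1)) ^ (i - k) :=
        pow_le_pow_left₀ hl.le hli _
      have hik : (i:ℝ) ^ (i - k) ≤ Real.exp 1 ^ i * (Nat.factorial i : ℝ) := by
        rcases Nat.eq_zero_or_pos i with hi0 | hi1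
        · subst hi0; simp
        · have h1i : (1:ℝ) ≤ (i:ℝ) := by exact_mod_cast hi1
          calc (i:ℝ) ^ (i - k) ≤ (i:ℝ) ^ i :=
              pow_le_pow_right₀ h1i (Nat.sub_le i k)
            _ ≤ Real.exp 1 ^ i * (Nat.factorial i : ℝ) := pow_self_le_exp_mul_factorial i
      have step3 : ((i:ℝ) / (A * Real.exp 1)) ^ (i - k) / (Nat.factorial i : ℝ)
          ≤ (A * Real.exp 1) ^ k * (A⁻¹) ^ i := by
        rw [div_pow, div_div]
        rw [div_le_iff₀ (by positivity)]
        calc (i:ℝ) ^ (i - k) ≤ Real.exp 1 ^ i * (Nat.factorial i : ℝ) := hik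
          _ = (A * Real.exp 1) ^ k * (A⁻¹) ^ i *
              ((A * Real.exp 1) ^ (i - k) * (Nat.factorial i : ℝ)) := by
            rw [show (A * Real.exp 1) ^ k * (A⁻¹) ^ i *
                ((A * Real.exp 1) ^ (i - k) * (Nat.factorial i : ℝ))
              = ((A * Real.exp 1) ^ k * (A * Real.exp 1) ^ (i - k)) * (A⁻¹) ^ i
                  * (Nat.factorial i : ℝ) by ring]
            rw [← pow_add, Nat.add_sub_cancel' hki, ← mul_pow]
            congr 2
            field_simp
      have hdesc : (Nat.descFactorial i p : ℝ) ≤ (i:ℝ) ^ p := by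
        exact_mod_cast Nat.descFactorial_le_pow i p
      have hAinv : (A⁻¹ : ℝ) ^ i ≤ r ^ i * (B ^ j)⁻¹ := by
        have h1 : (A⁻¹ : ℝ) ^ i = r ^ i * (B⁻¹) ^ i := by
          rw [← mul_pow]; congr 1; rw [hr]; field_simp
        rw [h1]
        apply mul_le_mul_of_nonneg_left _ (pow_nonneg hr0.le i)
        calc (B⁻¹ : ℝ) ^ i ≤ B⁻¹ ^ j :=
            pow_le_pow_of_le_one (by positivity) (inv_le_one_of_one_le₀ hB1.le) hji
          _ = (B ^ j)⁻¹ := by rw [inv_pow]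
      have hterm : l ^ i / (fk k l * (Nat.factorial i : ℝ)) ≤ K * (A⁻¹) ^ i := by
        calc l ^ i / (fk k l * (Nat.factorial i : ℝ))
            ≤ (Nat.factorial k : ℝ) * (l ^ (i - k) / (Nat.factorial i : ℝ)) := step1
          _ ≤ (Nat.factorial k : ℝ) *
              (((i:ℝ) / (A * Real.exp 1)) ^ (i - k) / (Nat.factorial i : ℝ)) := by
            apply mul_le_mul_of_nonneg_left _ hfact_pos.le
            apply div_le_div_of_nonneg_right step2 (by positivity)
          _ ≤ (Nat.factorial k : ℝ) * ((A * Real.exp 1) ^ k * (A⁻¹) ^ i) :=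
            mul_le_mul_of_nonneg_left step3 hfact_pos.le
          _ = K * (A⁻¹) ^ i := by rw [hKdef]; ring
      calc (Nat.descFactorial i p : ℝ) * (l ^ i / (fk k l * (Nat.factorial i : ℝ)))
          ≤ (i:ℝ) ^ p * (K * (A⁻¹) ^ i) := by
            apply mul_le_mul hdesc hterm
              (div_nonneg (by positivity) (mul_nonneg hfk_pos.le (by positivity)))
              (by positivity)
        _ ≤ (i:ℝ) ^ p * (K * (r ^ i * (B ^ j)⁻¹)) := by
            apply mul_le_mul_of_nonneg_left _ (by positivity)
            exact mul_le_mul_of_nonneg_left hAinv hK0.le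
        _ = K * ((i:ℝ)^p * r^i) * (B ^ j)⁻¹ := by ring
    · exact mul_nonneg (mul_nonneg hK0.le
        (mul_nonneg (by positivity) (pow_nonneg hr0.le i))) (by positivity)
  have hg_nonneg : ∀ i : ℕ, (0:ℝ) ≤ (if j ≤ i then
      (Nat.descFactorial i p : ℝ) *
        (if k ≤ i then l ^ i / (fk k l * (Nat.factorial i : ℝ)) else 0) else 0) := by
    intro i
    split
    · apply mul_nonneg (by positivity)
      split
      · exact div_nonneg (by positivity) (mul_nonneg hfk_pos.le (by positivity))
      · exact le_rfl
    · exact le_rfl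
  have hh_sum : Summable (fun i : ℕ => K * ((i:ℝ)^p * r^i) * (B ^ j)⁻¹) :=
    (hS.mul_left K).mul_right _
  have hg_sum : Summable (fun i : ℕ => (if j ≤ i then
      (Nat.descFactorial i p : ℝ) *
        (if k ≤ i then l ^ i / (fk k l * (Nat.factorial i : ℝ)) else 0) else 0)) :=
    Summable.of_nonneg_of_le hg_nonneg key hh_sum
  calc ∑' i : ℕ, (if j ≤ i then
          (Nat.descFactorial i p : ℝ) *
            (if k ≤ i then l ^ i / (fk k l * (Nat.factorial i : ℝ)) else 0)
        else 0)
      ≤ ∑' i : ℕ, K * ((i:ℝ)^p * r^i) * (B ^ j)⁻¹ := Summable.tsum_le_tsum key hg_sum hh_sum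
    _ = K * S * (B ^ j)⁻¹ := by
        rw [tsum_mul_right, tsum_mul_left]
    _ ≤ (K * S + 1) * B ^ (-(j:ℤ)) := by
        rw [hBjinv]
        apply mul_le_mul_of_nonneg_right (by linarith) (by positivity)
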